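/- For d ≥ 2, there exists a d-simplex in Euclidean d-space whose circumcenter lies outside the simplex and whose d+1 cevians through the circumcenter all have equal length, if and only if d ≥ 4. -/

import Mathlib

/-
Common geometric notions for simplices in Euclidean d-space, following
Edmonds–Hajja–Martini, "Coincidences of simplex centers and related facial
structures".  A d-simplex is given by its d+1 affinely independent vertices
`A : Fin (d+1) → EuclideanSpace ℝ (Fin d)`.
-/

noncomputable section

abbrev Pt (d : ℕ) : Type := EuclideanSpace ℝ (Fin d)

variable {d : ℕ}

/-- The centroid of the simplex with vertices `A`: the average of the vertices. -/
def ctr (A : Fin (d+1) → Pt d) : Pt d := Finset.centroid ℝ Finset.univ A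

/-- `C` is a circumcenter of the simplex with vertices `A`:
it is equidistant from all the vertices. -/
def IsCircumcenter (A : Fin (d+1) → Pt d) (C : Pt d) : Prop :=
  ∃ r : ℝ, ∀ i, dist C (A i) = r

/-- The affine span (hyperplane) of the facet opposite to vertex `j`. -/
def facetSpan (A : Fin (d+1) → Pt d) (j : Fin (d+1)) : Set (Pt d) :=
  (affineSpan ℝ (A '' {i | i ≠ j}) : Set (Pt d))

/-- `I` is the incenter of the simplex with vertices `A`: an interior point
equidistant from the affine hyperplanes spanned by the facets. -/
def IsIncenter (A : Fin (d+1) → Pt d) (I : Pt d) : Prop :=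
  I ∈ interior (convexHull ℝ (Set.range A)) ∧
    ∃ r : ℝ, ∀ j, Metric.infDist I (facetSpan A j) = r

/-- `F` is a Fermat-Torricelli point of the simplex with vertices `A`:
it minimizes the sum of the distances to the vertices. -/
def IsFermatPoint (A : Fin (d+1) → Pt d) (F : Pt d) : Prop :=
  ∀ Q : Pt d, ∑ i, dist F (A i) ≤ ∑ i, dist Q (A i)

/-- The altitude of the simplex at vertex `j`: the distance from `A j` to the
affine span of the opposite facet. -/
def altitude (A : Fin (d+1) → Pt d) (j : Fin (d+1)) : ℝ :=
  Metric.infDist (A j) (facetSpan A j)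

/-- Equiareal: all facets have the same `(d-1)`-dimensional volume; equivalently
(since `d · vol S = facet volume · altitude`), all altitudes are equal. -/
def Equiareal (A : Fin (d+1) → Pt d) : Prop :=
  ∀ j k, altitude A j = altitude A k

/-- `r` is the circumradius of the facet opposite `j`: some point of the affine
span of the facet is at distance `r` from all its vertices. -/
def IsFacetCircumradius (A : Fin (d+1) → Pt d) (j : Fin (d+1)) (r : ℝ) : Prop :=
  ∃ C ∈ affineSpan ℝ (A '' {i | i ≠ j}), ∀ i, i ≠ j → dist C (A i) = r

/-- Equiradial: all facets have the same circumradius. -/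
def Equiradial (A : Fin (d+1) → Pt d) : Prop :=
  ∃ r : ℝ, ∀ j, IsFacetCircumradius A j r

/-- Equifacetal: any two facets are congruent, i.e. there is an isometry of the
ambient space carrying the vertex set of one facet onto that of the other. -/
def Equifacetal (A : Fin (d+1) → Pt d) : Prop :=
  ∀ j k, ∃ f : Pt d ≃ᵢ Pt d, f '' (A '' {i | i ≠ j}) = A '' {i | i ≠ k}

/-- Regular: all edges have equal length. -/
def Regular (A : Fin (d+1) → Pt d) : Prop :=
  ∀ i j k l, i ≠ j → k ≠ l → dist (A i) (A j) = dist (A k) (A l)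

/-- `Q` is the foot of the cevian through vertex `A j` relative to the point `P`:
`Q` is the point where the line through `A j` and `P` meets the (affine span of
the) opposite facet. -/
def IsCevianFoot (A : Fin (d+1) → Pt d) (j : Fin (d+1)) (P Q : Pt d) : Prop :=
  Collinear ℝ ({A j, P, Q} : Set (Pt d)) ∧ Q ∈ affineSpan ℝ (A '' {i | i ≠ j})

/-- All `d+1` cevians through `P` exist and have equal lengths. -/
def EqualCevians (A : Fin (d+1) → Pt d) (P : Pt d) : Prop :=
  ∃ L : ℝ, ∀ j, ∃ Q, IsCevianFoot A j P Q ∧ dist (A j) Q = L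

def mkBasis (A : Fin (d+1) → Pt d) (hA : AffineIndependent ℝ A) :
    AffineBasis (Fin (d+1)) ℝ (Pt d) :=
  ⟨A, hA, hA.affineSpan_eq_top_iff_card_eq_finrank_add_one.mpr (by simp)⟩

@[simp] lemma mkBasis_coe (A : Fin (d+1) → Pt d) (hA : AffineIndependent ℝ A) :
    ⇑(mkBasis A hA) = A := rfl

/-- coord j vanishes on the affine span of the opposite facet. -/
lemma coord_zero_of_mem_facet (b : AffineBasis (Fin (d+1)) ℝ (Pt d)) (j : Fin (d+1))
    {Q : Pt d} (hQ : Q ∈ affineSpan ℝ (⇑b '' {i | i ≠ j})) : b.coord j Q = 0 := by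
  refine affineSpan_induction (p := fun x => b.coord j x = 0) hQ ?_ ?_
  · rintro x ⟨i, hi, rfl⟩
    exact b.coord_apply_ne (Ne.symm hi)
  · intro c u v w hu hv hw
    have := (b.coord j).map_vadd w (c • (u -ᵥ v))
    rw [this, (b.coord j).linear.map_smul, AffineMap.linearMap_vsub]
    simp [hu, hv, hw]

lemma cevian_len (b : AffineBasis (Fin (d+1)) ℝ (Pt d)) {P Q : Pt d} {j : Fin (d+1)}
    (hne : b j ≠ P) (h : IsCevianFoot (⇑b) j P Q) :
    dist (b j) Q * |1 - b.coord j P| = dist (b j) P := by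
  obtain ⟨hcol, hmem⟩ := h
  have hj : b j ∈ ({b j, P, Q} : Set (Pt d)) := by simp
  obtain ⟨v, hv⟩ := (collinear_iff_of_mem hj).mp hcol
  obtain ⟨s, hs⟩ := hv P (by simp)
  obtain ⟨u, hu⟩ := hv Q (by simp)
  have hs0 : s ≠ 0 := by
    rintro rfl
    exact hne (by simp [hs])
  set t : ℝ := u / s with ht
  have hPv : P -ᵥ b j = s • v := by rw [hs, vadd_vsub]
  have hQv : Q -ᵥ b j = t • (P -ᵥ b j) := by
    rw [hPv, hu, vadd_vsub, smul_smul, div_mul_cancel₀ u hs0]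
  have h0 : b.coord j Q = 0 := coord_zero_of_mem_facet b j hmem
  have hQ' : Q = t • (P -ᵥ b j) +ᵥ b j := by rw [← hQv, vsub_vadd]
  have hcoord : t * (b.coord j P - 1) + 1 = 0 := by
    have h2 := (b.coord j).map_vadd (b j) (t • (P -ᵥ b j))
    rw [← hQ', h0, (b.coord j).linear.map_smul, AffineMap.linearMap_vsub,
      b.coord_apply_eq] at h2
    simpa [vsub_eq_sub, vadd_eq_add, smul_eq_mul] using h2.symm
  have hts : t * (1 - b.coord j P) = 1 := by linarith
  have hdist : dist (b j) Q = |t| * dist (b j) P := by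
    rw [dist_comm (b j) Q, dist_eq_norm_vsub (Pt d), hQv, norm_smul,
      dist_comm (b j) P, dist_eq_norm_vsub (Pt d)]
    simp
  rw [hdist, mul_assoc, mul_comm (dist (b j) P), ← mul_assoc, ← abs_mul, hts]
  simp

lemma cevian_exists (b : AffineBasis (Fin (d+1)) ℝ (Pt d)) (P : Pt d) (j : Fin (d+1))
    (hc : b.coord j P ≠ 1) :
    ∃ Q, IsCevianFoot (⇑b) j P Q ∧ dist (b j) Q = dist (b j) P / |1 - b.coord j P| := by
  classical
  set c := b.coord j P with hcdef
  set t : ℝ := 1 / (1 - c) with htdef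
  set Q := AffineMap.lineMap (b j) P t with hQdef
  have hQv : Q -ᵥ b j = t • (P -ᵥ b j) := by
    rw [hQdef, AffineMap.lineMap_apply, vadd_vsub]
  refine ⟨Q, ⟨?_, ?_⟩, ?_⟩
  · have h1 : Collinear ℝ ({Q, b j, P} : Set (Pt d)) :=
      collinear_insert_of_mem_affineSpan_pair (AffineMap.lineMap_mem_affineSpan_pair t _ _)
    have hset : ({b j, P, Q} : Set (Pt d)) = {Q, b j, P} := by
      ext x; simp only [Set.mem_insert_iff, Set.mem_singleton_iff]; tauto
    rw [hset]; exact h1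
  · -- membership in the facet span
    set p' : {i : Fin (d+1) // i ≠ j} → Pt d := fun i => b i.val with hp'
    set w' : {i : Fin (d+1) // i ≠ j} → ℝ := fun i => b.coord i.val P * t with hw'
    have hsumE : ∑ i ∈ Finset.univ.erase j, b.coord i P = 1 - c := by
      rw [Finset.sum_erase_eq_sub (Finset.mem_univ j), b.sum_coord_apply_eq_one]
    have hsub : ∀ f : Fin (d+1) → ℝ,
        ∑ i ∈ Finset.univ.erase j, f i = ∑ i : {i : Fin (d+1) // i ≠ j}, f i.val := by
      intro f
      exact Finset.sum_subtype _ (by intro x; simp) f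
    have hsum' : ∑ i : {i : Fin (d+1) // i ≠ j}, w' i = 1 := by
      have : ∑ i : {i : Fin (d+1) // i ≠ j}, b.coord i.val P = 1 - c :=
        ((hsub fun i => b.coord i P).symm).trans hsumE
      rw [hw']
      simp only []
      rw [← Finset.sum_mul, this, htdef]
      rw [mul_one_div]
      exact div_self (sub_ne_zero.mpr (Ne.symm hc))
    have hsubV : ∀ f : Fin (d+1) → EuclideanSpace ℝ (Fin d),
        ∑ i ∈ Finset.univ.erase j, f i = ∑ i : {i : Fin (d+1) // i ≠ j}, f i.val := by
      intro f
      exact Finset.sum_subtype _ (by intro x; simp) f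
    have huniv : ∑ i : Fin (d+1), b.coord i P • (b i -ᵥ b j) = P -ᵥ b j := by
      have h1 := b.affineCombination_coord_eq_self P
      have h2 := Finset.univ.affineCombination_eq_weightedVSubOfPoint_vadd_of_sum_eq_one
        (fun i => b.coord i P) (⇑b) (b.sum_coord_apply_eq_one P) (b j)
      rw [h1, Finset.weightedVSubOfPoint_apply] at h2
      exact ((eq_vadd_iff_vsub_eq _ _ _).mp h2).symm
    have herase : ∑ i ∈ Finset.univ.erase j, b.coord i P • (b i -ᵥ b j) = P -ᵥ b j := by
      rw [Finset.sum_erase_eq_sub (Finset.mem_univ j), huniv, vsub_self, smul_zero, sub_zero]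
    have hvsub : ∑ i : {i : Fin (d+1) // i ≠ j}, b.coord i.val P • (p' i -ᵥ b j)
        = P -ᵥ b j := by
      rw [hp']
      exact (hsubV fun i => b.coord i P • (b i -ᵥ b j)).symm.trans herase
    have hcomb : Finset.univ.affineCombination ℝ p' w' = Q := by
      rw [Finset.affineCombination_eq_weightedVSubOfPoint_vadd_of_sum_eq_one _ w' p' hsum' (b j),
        Finset.weightedVSubOfPoint_apply]
      have hw2 : ∑ i : {i : Fin (d+1) // i ≠ j}, w' i • (p' i -ᵥ b j)
          = t • (P -ᵥ b j) := by
        rw [← hvsub, Finset.smul_sum]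
        refine Finset.sum_congr rfl fun i _ => ?_
        show (b.coord i.val P * t) • (p' i -ᵥ b j) = _
        rw [mul_comm, ← smul_smul]
      rw [hw2, ← hQv, vsub_vadd]
    have hrange : Set.range p' = ⇑b '' {i | i ≠ j} := by
      rw [hp']
      have : (fun i : {i : Fin (d+1) // i ≠ j} => b i.val) = ⇑b ∘ Subtype.val := rfl
      rw [this, Set.range_comp, Subtype.range_coe_subtype]
    rw [← hcomb, ← hrange]
    exact affineCombination_mem_affineSpan hsum' p'
  · rw [dist_comm (b j) Q, dist_eq_norm_vsub (Pt d), hQv, norm_smul,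
      dist_comm (b j) P, dist_eq_norm_vsub (Pt d), htdef]
    simp [abs_div]
    ring

lemma no_small (d : ℕ) (hd : 2 ≤ d) (hd3 : d ≤ 3) (A : Fin (d+1) → Pt d)
    (hA : AffineIndependent ℝ A) (C : Pt d) (r : ℝ) (hr : ∀ i, dist C (A i) = r)
    (hout : C ∉ convexHull ℝ (Set.range A)) (hcev : EqualCevians A C) : False := by
  classical
  set b := mkBasis A hA with hb
  set c : Fin (d+1) → ℝ := fun i => b.coord i C with hc
  have h01 : (⟨0, by omega⟩ : Fin (d+1)) ≠ ⟨1, by omega⟩ := by simp [Fin.ext_iff]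
  have hr0 : 0 ≤ r := (hr ⟨0, by omega⟩) ▸ dist_nonneg
  have hrpos : 0 < r := by
    rcases hr0.lt_or_eq with h | h
    · exact h
    · exfalso
      have e0 : C = A ⟨0, by omega⟩ := dist_eq_zero.mp ((hr _).trans h.symm)
      have e1 : C = A ⟨1, by omega⟩ := dist_eq_zero.mp ((hr _).trans h.symm)
      exact h01 (hA.injective (e0.symm.trans e1))
  have hAC : ∀ j, A j ≠ C := by
    intro j h
    have : dist C (A j) ≠ 0 := by rw [hr j]; exact ne_of_gt hrpos
    exact this (by rw [h, dist_self])
  have hneg : ∃ i0, c i0 < 0 := by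
    by_contra h
    push_neg at h
    apply hout
    have h1 := b.affineCombination_coord_eq_self C
    rw [← h1]
    exact affineCombination_mem_convexHull (fun i _ => h i) (b.sum_coord_apply_eq_one C)
  obtain ⟨L, hL⟩ := hcev
  have hlen : ∀ j, L * |1 - c j| = r := by
    intro j
    obtain ⟨Q, hfoot, hQL⟩ := hL j
    have h2 : dist (A j) Q * |1 - c j| = dist (A j) C := cevian_len b (hAC j) hfoot
    rw [hQL] at h2
    rw [h2, dist_comm, hr j]
  have hL0 : 0 ≤ L := by
    obtain ⟨Q, _, hQL⟩ := hL ⟨0, by omega⟩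
    rw [← hQL]; exact dist_nonneg
  have hLpos : 0 < L := by
    rcases hL0.lt_or_eq with h | h
    · exact h
    · exfalso; have := hlen ⟨0, by omega⟩; rw [← h] at this; simp at this; linarith
  set κ : ℝ := r / L with hκ
  have habs : ∀ j, |1 - c j| = κ := by
    intro j
    rw [eq_div_iff (ne_of_gt hLpos), mul_comm]
    exact hlen j
  have hκpos : 0 < κ := div_pos hrpos hLpos
  obtain ⟨i0, hi0⟩ := hneg
  have hκ1 : 1 < κ := by
    rw [← habs i0]
    calc (1:ℝ) < 1 - c i0 := by linarith
    _ ≤ |1 - c i0| := le_abs_self _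
  have hdichot : ∀ i, c i = 1 - κ ∨ c i = 1 + κ := by
    intro i
    rcases (abs_eq (le_of_lt hκpos)).mp (habs i) with h | h
    · left; linarith
    · right; linarith
  set p : Fin (d+1) → Prop := fun i => c i = 1 + κ with hp
  set S : Finset (Fin (d+1)) := Finset.univ.filter p with hS
  set T : Finset (Fin (d+1)) := Finset.univ.filter (fun i => ¬ p i) with hT
  have hcard : S.card + T.card = d + 1 := by
    rw [hS, hT]
    rw [Finset.card_filter_add_card_filter_not]
    simp
  have hsumc : ∑ i, c i = 1 := b.sum_coord_apply_eq_one C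
  have hsplit : ∑ i ∈ S, c i + ∑ i ∈ T, c i = 1 := by
    rw [hS, hT, Finset.sum_filter_add_sum_filter_not]
    exact hsumc
  have hSsum : ∑ i ∈ S, c i = S.card * (1 + κ) := by
    have hall : ∀ i ∈ S, c i = 1 + κ := fun i hi => (Finset.mem_filter.mp hi).2
    rw [Finset.sum_congr rfl hall, Finset.sum_const, nsmul_eq_mul]
  have hTsum : ∑ i ∈ T, c i = T.card * (1 - κ) := by
    have hall : ∀ i ∈ T, c i = 1 - κ := by
      intro i hi
      rcases hdichot i with h | h
      · exact h
      · exact absurd h (Finset.mem_filter.mp hi).2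
    rw [Finset.sum_congr rfl hall, Finset.sum_const, nsmul_eq_mul]
  have hE : (S.card : ℝ) * (1 + κ) + T.card * (1 - κ) = 1 := by
    rw [← hSsum, ← hTsum]; exact hsplit
  -- derive S.card = 1
  have hcardR : (S.card : ℝ) + T.card = d + 1 := by
    exact_mod_cast congrArg (Nat.cast : ℕ → ℝ) hcard
  have hd2 : (2:ℝ) ≤ (d:ℝ) := by exact_mod_cast hd
  have hE2 : ((T.card : ℝ) - S.card) * κ = d := by nlinarith [hE, hcardR]
  have hTSdiv : (T.card : ℝ) - S.card = d / κ :=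
    (eq_div_iff (ne_of_gt hκpos)).mpr hE2
  have hdpos : (0:ℝ) < d := by linarith
  have hTS : (0:ℝ) < (T.card : ℝ) - S.card := by
    rw [hTSdiv]; positivity
  have hTSd : ((T.card : ℝ) - S.card) < d := by
    rw [hTSdiv]; exact div_lt_self hdpos hκ1
  have hS1 : S.card = 1 := by
    have hR1 : (1:ℝ) < 2 * S.card := by linarith
    have hR2 : (2:ℝ) * S.card < d + 1 := by linarith
    have h3 : 1 < 2 * S.card := by exact_mod_cast hR1
    have h4 : 2 * S.card < d + 1 := by exact_mod_cast hR2
    omega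
  have hTd : (T.card:ℝ) = d := by
    rw [hS1] at hcardR; push_cast at hcardR ⊢; linarith
  have hEκ : ((d:ℝ) - 1) * κ = d := by
    rw [hS1] at hE2; push_cast at hE2; rw [hTd] at hE2; exact hE2
  obtain ⟨j1, hj1⟩ := Finset.card_eq_one.mp hS1
  have hcj1 : c j1 = 1 + κ := by
    have : j1 ∈ S := by rw [hj1]; exact Finset.mem_singleton_self j1
    rw [hS, Finset.mem_filter] at this; exact this.2
  have hcother : ∀ i, i ≠ j1 → c i = 1 - κ := by
    intro i hi
    rcases hdichot i with h | h
    · exact h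
    · exfalso
      have : i ∈ S := by rw [hS, Finset.mem_filter]; exact ⟨Finset.mem_univ i, h⟩
      rw [hj1, Finset.mem_singleton] at this
      exact hi this
  -- vector identity
  have hvec : ∑ i, c i • (A i -ᵥ C) = (0 : EuclideanSpace ℝ (Fin d)) := by
    have h1 := b.affineCombination_coord_eq_self C
    have h2 := Finset.univ.affineCombination_eq_weightedVSubOfPoint_vadd_of_sum_eq_one
      (fun i => b.coord i C) (⇑b) (b.sum_coord_apply_eq_one C) C
    rw [h1, Finset.weightedVSubOfPoint_apply] at h2
    have h3 := ((eq_vadd_iff_vsub_eq _ _ _).mp h2).symm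
    rw [vsub_self] at h3
    exact h3
  have hsplit2 : (∑ i ∈ Finset.univ.erase j1, c i • (A i -ᵥ C)) + c j1 • (A j1 -ᵥ C)
      = (0 : EuclideanSpace ℝ (Fin d)) := by
    rw [Finset.sum_erase_add _ _ (Finset.mem_univ j1)]
    exact hvec
  have hmain : (1 + κ) • (A j1 -ᵥ C) = - ∑ i ∈ Finset.univ.erase j1, c i • (A i -ᵥ C) := by
    rw [← hcj1]
    exact eq_neg_of_add_eq_zero_right hsplit2
  have hnormv : ∀ i, ‖A i -ᵥ C‖ = r := by
    intro i
    rw [← dist_eq_norm_vsub, dist_comm, hr i]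
  have hLHS : ‖(1 + κ) • (A j1 -ᵥ C)‖ = (1 + κ) * r := by
    rw [norm_smul, hnormv, Real.norm_eq_abs, abs_of_pos (by linarith)]
  have hRHS : ‖∑ i ∈ Finset.univ.erase j1, c i • (A i -ᵥ C)‖ ≤ (d : ℝ) * ((κ - 1) * r) := by
    calc ‖∑ i ∈ Finset.univ.erase j1, c i • (A i -ᵥ C)‖
        ≤ ∑ i ∈ Finset.univ.erase j1, ‖c i • (A i -ᵥ C)‖ := norm_sum_le _ _
      _ = ∑ i ∈ Finset.univ.erase j1, (κ - 1) * r := by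
          refine Finset.sum_congr rfl fun i hi => ?_
          rw [norm_smul, hnormv, hcother i (Finset.ne_of_mem_erase hi), Real.norm_eq_abs]
          rw [abs_of_neg (by linarith), neg_sub]
      _ = (d : ℝ) * ((κ - 1) * r) := by
          rw [Finset.sum_const, Finset.card_erase_of_mem (Finset.mem_univ j1)]
          simp [nsmul_eq_mul]
  have hkey : (d:ℝ) * (κ - 1) = κ := by linear_combination hEκ
  have hfin : (1 + κ) * r ≤ κ * r := by
    rw [← hLHS]
    calc ‖(1 + κ) • (A j1 -ᵥ C)‖ = ‖∑ i ∈ Finset.univ.erase j1, c i • (A i -ᵥ C)‖ := by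
          rw [hmain, norm_neg]
      _ ≤ (d : ℝ) * ((κ - 1) * r) := hRHS
      _ = κ * r := by rw [← mul_assoc, hkey]
  have : (1 + κ) ≤ κ := (mul_le_mul_iff_left₀ hrpos).mp hfin
  linarith

namespace Constr

noncomputable def mR (n : ℕ) : ℝ := 1/((n:ℝ)+3)
noncomputable def zR (n : ℕ) : ℝ := (4*(n:ℝ)+10)/((n:ℝ)+1)
noncomputable def aaR (n : ℕ) : ℝ := (((n:ℝ)+2)/((n:ℝ)+3) + (7*(n:ℝ)+19)/((n:ℝ)+1))/((n:ℝ)+3)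
noncomputable def aR (n : ℕ) : ℝ := Real.sqrt (aaR n)

lemma aaR_pos (n : ℕ) : 0 < aaR n := by unfold aaR; positivity
lemma aR_pos (n : ℕ) : 0 < aR n := Real.sqrt_pos.mpr (aaR_pos n)
lemma aR_sq (n : ℕ) : aR n ^ 2 = aaR n := Real.sq_sqrt (aaR_pos n).le

noncomputable def vtx (n : ℕ) : Fin (n+5) → Pt (n+4) := fun j =>
  if j.val = 0 then WithLp.toLp 2 (fun i : Fin (n+4) => if i.val = n+3 then 1 else mR n + aR n)
  else if j.val = 1 then WithLp.toLp 2 (fun i : Fin (n+4) => if i.val = n+3 then 1 else mR n - aR n)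
  else WithLp.toLp 2 (fun i : Fin (n+4) => if i.val + 2 = j.val then 1 else 0)

noncomputable def Cc (n : ℕ) : Pt (n+4) := WithLp.toLp 2 (fun i : Fin (n+4) => if i.val = n+3 then zR n else mR n)

noncomputable def cw (n : ℕ) : Fin (n+5) → ℝ := fun j =>
  if j.val ≤ 1 then (2*(n:ℝ)+5)/((n:ℝ)+1) else -3/((n:ℝ)+1)

lemma eval_sum {k : ℕ} {ι : Type*} (s : Finset ι) (f : ι → Pt k) (i : Fin k) :
    (∑ j ∈ s, f j) i = ∑ j ∈ s, f j i := by
  have h := map_sum (EuclideanSpace.proj (𝕜 := ℝ) i) f s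
  exact h

lemma cw_sum (n : ℕ) : ∑ j, cw n j = 1 := by
  rw [Fin.sum_univ_succ, Fin.sum_univ_succ]
  have h0 : cw n 0 = (2*(n:ℝ)+5)/((n:ℝ)+1) := by simp [cw]
  have h1 : cw n ((0 : Fin (n+4)).succ) = (2*(n:ℝ)+5)/((n:ℝ)+1) := by simp [cw]
  have h2 : ∀ i : Fin (n+3), cw n (i.succ.succ) = -3/((n:ℝ)+1) := by
    intro i; simp [cw, Fin.val_succ]
  rw [h0, h1, Finset.sum_congr rfl (fun i _ => h2 i), Finset.sum_const, Finset.card_univ,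
    Fintype.card_fin, nsmul_eq_mul]
  have hne : ((n:ℝ)+1) ≠ 0 := by positivity
  field_simp
  push_cast
  ring

noncomputable def rr (n : ℕ) : ℝ := Real.sqrt (((n:ℝ)+3) * aaR n + (zR n - 1)^2)

lemma rr_pos (n : ℕ) : 0 < rr n := by
  apply Real.sqrt_pos.mpr
  have h1 := aaR_pos n
  have h2 : 1 < zR n := by
    unfold zR
    rw [lt_div_iff₀ (by positivity)]
    push_cast; nlinarith [Nat.cast_nonneg (α := ℝ) n]
  nlinarith [Nat.cast_nonneg (α := ℝ) n]

lemma dist_sq_sum {k : ℕ} (x y : Pt k) : dist x y = Real.sqrt (∑ i, (x i - y i)^2) := by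
  rw [EuclideanSpace.dist_eq]
  congr 1
  refine Finset.sum_congr rfl fun i _ => ?_
  rw [Real.dist_eq, sq_abs]

lemma dist_Cc_vtx (n : ℕ) (j : Fin (n+5)) : dist (Cc n) (vtx n j) = rr n := by
  rw [dist_sq_sum]
  unfold rr
  congr 1
  rcases lt_or_ge j.val 2 with hj | hj
  · -- apex cases
    have hvtx : ∀ i : Fin (n+4), i.val ≠ n+3 →
        (vtx n j i = mR n + aR n ∨ vtx n j i = mR n - aR n) := by
      intro i hi
      unfold vtx
      rcases (by omega : j.val = 0 ∨ j.val = 1) with h0 | h0 <;> rw [h0] <;> simp [hi]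
    have hlast : vtx n j ⟨n+3, by omega⟩ = 1 := by
      unfold vtx
      rcases (by omega : j.val = 0 ∨ j.val = 1) with h0 | h0 <;> rw [h0] <;> simp
    rw [Fin.sum_univ_castSucc]
    have hterm : ∀ i : Fin (n+3), (Cc n i.castSucc - vtx n j i.castSucc)^2 = aaR n := by
      intro i
      have hi : (i.castSucc : Fin (n+4)).val ≠ n+3 := by
        simp [Fin.coe_castSucc]; omega
      have hCc : Cc n i.castSucc = mR n := by unfold Cc; rw [WithLp.ofLp_toLp, if_neg hi]
      rcases hvtx i.castSucc hi with h | h <;> rw [hCc, h] <;> ring_nf <;>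
        rw [aR_sq] <;> ring
    have hCl : Cc n (Fin.last (n+3)) = zR n := by unfold Cc; simp [Fin.last]
    have hvl : vtx n j (Fin.last (n+3)) = 1 := hlast
    rw [Finset.sum_congr rfl (fun i _ => hterm i), Finset.sum_const, Finset.card_univ,
      Fintype.card_fin, nsmul_eq_mul, hCl, hvl]
    push_cast
    ring
  · -- base cases
    have hjlt : j.val - 2 < n+3 := by omega
    set K : Fin (n+3) := ⟨j.val - 2, hjlt⟩ with hK
    have hvtx : ∀ i : Fin (n+4), vtx n j i = if i.val + 2 = j.val then 1 else 0 := by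
      intro i
      unfold vtx
      rw [if_neg (by omega), if_neg (by omega)]
    rw [Fin.sum_univ_castSucc]
    have hterm : ∀ i : Fin (n+3), (Cc n i.castSucc - vtx n j i.castSucc)^2
        = mR n ^ 2 + (if i = K then (mR n - 1)^2 - mR n ^2 else 0) := by
      intro i
      have hi : (i.castSucc : Fin (n+4)).val ≠ n+3 := by
        simp [Fin.coe_castSucc]; omega
      have hCc : Cc n i.castSucc = mR n := by unfold Cc; rw [WithLp.ofLp_toLp, if_neg hi]
      rw [hCc, hvtx]
      have hiff : ((i.castSucc : Fin (n+4)).val + 2 = j.val) ↔ i = K := by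
        rw [Fin.ext_iff, hK]
        simp [Fin.coe_castSucc]
        omega
      by_cases h : i = K
      · rw [if_pos (hiff.mpr h), if_pos h]; ring
      · rw [if_neg (fun hc => h (hiff.mp hc)), if_neg h]; ring
    have hCl : Cc n (Fin.last (n+3)) = zR n := by unfold Cc; simp [Fin.last]
    have hvl : vtx n j (Fin.last (n+3)) = 0 := by
      rw [hvtx]
      have : (Fin.last (n+3)).val + 2 ≠ j.val := by simp [Fin.last]; omega
      rw [if_neg this]
    rw [Finset.sum_congr rfl (fun i _ => hterm i), Finset.sum_add_distrib,
      Finset.sum_const, Finset.card_univ, Fintype.card_fin, nsmul_eq_mul,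
      Fintype.sum_ite_eq' K (fun _ => (mR n - 1)^2 - mR n ^2), hCl, hvl]
    -- now pure arithmetic identity
    unfold mR zR aaR
    have h1 : ((n:ℝ)+1) ≠ 0 := by positivity
    have h3 : ((n:ℝ)+3) ≠ 0 := by positivity
    field_simp
    push_cast
    ring


lemma zR_gt_one (n : ℕ) : 1 < zR n := by
  unfold zR
  rw [lt_div_iff₀ (by positivity)]
  nlinarith [Nat.cast_nonneg (α := ℝ) n]

lemma sum5 (n : ℕ) (f : Fin (n+5) → ℝ) :
    ∑ j, f j = f 0 + f ((0 : Fin (n+4)).succ) + ∑ i : Fin (n+3), f (i.succ.succ) := by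
  rw [Fin.sum_univ_succ, Fin.sum_univ_succ]; ring

lemma vtx0_apply (n : ℕ) (i : Fin (n+4)) :
    vtx n 0 i = if i.val = n+3 then 1 else mR n + aR n := by simp [vtx]

lemma vtx1_apply (n : ℕ) (i : Fin (n+4)) :
    vtx n ((0 : Fin (n+4)).succ) i = if i.val = n+3 then 1 else mR n - aR n := by
  simp [vtx]

lemma vtxb_apply (n : ℕ) (t : Fin (n+3)) (i : Fin (n+4)) :
    vtx n (t.succ.succ) i = if i.val + 2 = t.val + 2 then 1 else 0 := by
  simp [vtx, Fin.val_succ]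

lemma cw0 (n : ℕ) : cw n 0 = (2*(n:ℝ)+5)/((n:ℝ)+1) := by simp [cw]
lemma cw1 (n : ℕ) : cw n ((0 : Fin (n+4)).succ) = (2*(n:ℝ)+5)/((n:ℝ)+1) := by simp [cw]
lemma cwb (n : ℕ) (t : Fin (n+3)) : cw n (t.succ.succ) = -3/((n:ℝ)+1) := by
  simp [cw, Fin.val_succ]

lemma vtx_indep (n : ℕ) : AffineIndependent ℝ (vtx n) := by
  rw [affineIndependent_iff_of_fintype]
  intro w hw0 hvs
  rw [Finset.weightedVSub_eq_linear_combination _ hw0] at hvs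
  have hcoord : ∀ i : Fin (n+4), ∑ j, w j * vtx n j i = 0 := by
    intro i
    have h := congrArg (fun v : Pt (n+4) => v i) hvs
    simp only at h
    rw [eval_sum] at h
    simpa [PiLp.smul_apply, smul_eq_mul] using h
  have hlast : w 0 + w ((0 : Fin (n+4)).succ) = 0 := by
    have h := hcoord ⟨n+3, by omega⟩
    rw [sum5] at h
    rw [vtx0_apply, vtx1_apply] at h
    simp only [if_pos rfl] at h
    have hz : ∀ t : Fin (n+3), w (t.succ.succ) * vtx n (t.succ.succ) ⟨n+3, by omega⟩ = 0 := by
      intro t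
      rw [vtxb_apply]
      rw [if_neg (by simp; omega)]
      ring
    rw [Finset.sum_congr rfl (fun t _ => hz t), Finset.sum_const, smul_zero] at h
    simpa using h
  have hbase : ∀ t : Fin (n+3),
      w 0 * (mR n + aR n) + w ((0 : Fin (n+4)).succ) * (mR n - aR n) + w (t.succ.succ) = 0 := by
    intro t
    have ht4 : t.val < n + 3 := t.isLt
    have h := hcoord ⟨t.val, by omega⟩
    rw [sum5] at h
    rw [vtx0_apply, vtx1_apply] at h
    rw [if_neg (by simp; omega), if_neg (by simp; omega)] at h
    have hz : ∀ s : Fin (n+3), w (s.succ.succ) * vtx n (s.succ.succ) ⟨t.val, by omega⟩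
        = if s = t then w (s.succ.succ) else 0 := by
      intro s
      rw [vtxb_apply]
      by_cases hs : s = t
      · subst hs; rw [if_pos rfl, if_pos rfl]; ring
      · rw [if_neg ?_, if_neg hs]
        · ring
        · simp only []
          intro hc
          apply hs
          exact Fin.ext (by omega)
    rw [Finset.sum_congr rfl (fun s _ => hz s), Fintype.sum_ite_eq' t] at h
    linarith
  have hsumbase : ∑ t : Fin (n+3), w (t.succ.succ) = 0 := by
    have h := hw0
    rw [sum5] at h
    linarith
  have hE : ((n:ℝ)+3) * (w 0 * (mR n + aR n) + w ((0 : Fin (n+4)).succ) * (mR n - aR n)) = 0 := by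
    have : ∀ t : Fin (n+3), w (t.succ.succ)
        = -(w 0 * (mR n + aR n) + w ((0 : Fin (n+4)).succ) * (mR n - aR n)) := by
      intro t; linarith [hbase t]
    rw [Finset.sum_congr rfl (fun t _ => this t), Finset.sum_const, Finset.card_univ,
      Fintype.card_fin, nsmul_eq_mul] at hsumbase
    push_cast at hsumbase ⊢
    linarith
  have hw01 : w 0 = w ((0 : Fin (n+4)).succ) := by
    have hn3 : ((n:ℝ)+3) ≠ 0 := by positivity
    have h2 : w 0 * (mR n + aR n) + w ((0 : Fin (n+4)).succ) * (mR n - aR n) = 0 := by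
      rcases mul_eq_zero.mp hE with h | h
      · exact absurd h hn3
      · exact h
    have ha := aR_pos n
    -- w0 (m+a) + w1 (m-a) = m(w0+w1) + a(w0-w1) = a(w0-w1)
    have : aR n * (w 0 - w ((0 : Fin (n+4)).succ)) = 0 := by
      linear_combination h2 - mR n * hlast
    rcases mul_eq_zero.mp this with h | h
    · exact absurd h (ne_of_gt ha)
    · linarith
  have hw0z : w 0 = 0 := by linarith [hlast, hw01]
  have hw1z : w ((0 : Fin (n+4)).succ) = 0 := by linarith [hlast, hw01]
  have hwbz : ∀ t : Fin (n+3), w (t.succ.succ) = 0 := by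
    intro t
    have := hbase t
    rw [hw0z, hw1z] at this
    linarith
  intro j
  rcases lt_or_ge j.val 2 with hj | hj
  · rcases (by omega : j.val = 0 ∨ j.val = 1) with h | h
    · have : j = 0 := Fin.ext (by simpa using h)
      rw [this]; exact hw0z
    · have : j = ((0 : Fin (n+4)).succ) := Fin.ext (by simpa using h)
      rw [this]; exact hw1z
  · have hjlt : j.val - 2 < n+3 := by omega
    have : j = ((⟨j.val - 2, hjlt⟩ : Fin (n+3)).succ.succ) := by
      apply Fin.ext
      simp [Fin.val_succ]
      omega
    rw [this]; exact hwbz _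

lemma hcomb (n : ℕ) : Finset.univ.affineCombination ℝ (vtx n) (cw n) = Cc n := by
  rw [Finset.affineCombination_eq_linear_combination _ _ _ (cw_sum n)]
  ext i
  rw [eval_sum]
  simp only [PiLp.smul_apply, smul_eq_mul]
  rw [sum5]
  rw [vtx0_apply, vtx1_apply, cw0, cw1]
  have hn1 : ((n:ℝ)+1) ≠ 0 := by positivity
  have hn3 : ((n:ℝ)+3) ≠ 0 := by positivity
  by_cases hi : i.val = n+3
  · rw [if_pos hi, if_pos hi]
    have hz : ∀ t : Fin (n+3), cw n (t.succ.succ) * vtx n (t.succ.succ) i = 0 := by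
      intro t
      rw [vtxb_apply, if_neg (by omega)]
      ring
    rw [Finset.sum_congr rfl (fun t _ => hz t), Finset.sum_const, smul_zero]
    have hCc : Cc n i = zR n := by unfold Cc; rw [WithLp.ofLp_toLp, if_pos hi]
    rw [hCc]
    unfold zR
    field_simp
    ring
  · rw [if_neg hi, if_neg hi]
    have hilt : i.val < n+3 := by omega
    have hz : ∀ t : Fin (n+3), cw n (t.succ.succ) * vtx n (t.succ.succ) i
        = if t = (⟨i.val, hilt⟩ : Fin (n+3)) then -3/((n:ℝ)+1) else 0 := by
      intro t
      rw [vtxb_apply, cwb]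
      by_cases hs : t = (⟨i.val, hilt⟩ : Fin (n+3))
      · subst hs; rw [if_pos (by simp), if_pos rfl]; ring
      · rw [if_neg ?_, if_neg hs]
        · ring
        · intro hc
          apply hs
          exact Fin.ext (by simpa using (by omega : t.val = i.val))
      
    rw [Finset.sum_congr rfl (fun t _ => hz t), Fintype.sum_ite_eq']
    have hCc : Cc n i = mR n := by unfold Cc; rw [WithLp.ofLp_toLp, if_neg hi]
    rw [hCc]
    unfold mR
    field_simp
    ring

lemma coord_eq (n : ℕ) (j : Fin (n+5)) :
    (mkBasis (vtx n) (vtx_indep n)).coord j (Cc n) = cw n j := by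
  have h := AffineBasis.coord_apply_combination_of_mem (mkBasis (vtx n) (vtx_indep n))
    (Finset.mem_univ j) (cw_sum n)
  rw [show ⇑(mkBasis (vtx n) (vtx_indep n)) = vtx n from rfl] at h
  rw [hcomb] at h
  exact h

lemma Cc_notin (n : ℕ) : Cc n ∉ convexHull ℝ (Set.range (vtx n)) := by
  intro hmem
  set iL : Fin (n+4) := ⟨n+3, by omega⟩ with hiL
  have hlin : IsLinearMap ℝ (fun x : Pt (n+4) => x iL) :=
    ⟨fun x y => rfl, fun c x => rfl⟩
  have hconv : Convex ℝ {x : Pt (n+4) | x iL ≤ 1} := convex_halfSpace_le hlin 1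
  have hsub : Set.range (vtx n) ⊆ {x : Pt (n+4) | x iL ≤ 1} := by
    rintro x ⟨j, rfl⟩
    show vtx n j iL ≤ 1
    unfold vtx
    rcases lt_or_ge j.val 2 with hj | hj
    · rcases (by omega : j.val = 0 ∨ j.val = 1) with h | h <;> rw [h] <;> simp [hiL]
    · rw [if_neg (by omega), if_neg (by omega)]
      rw [WithLp.ofLp_toLp, if_neg (by simp [hiL]; omega)]
      norm_num
  have hle := convexHull_min hsub hconv hmem
  have : Cc n iL = zR n := by unfold Cc; rw [WithLp.ofLp_toLp, if_pos (by simp [hiL])]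
  rw [Set.mem_setOf_eq, this] at hle
  exact absurd hle (not_le.mpr (zR_gt_one n))

end Constr

lemma exists_big (n : ℕ) :
    ∃ A : Fin ((n+4)+1) → Pt (n+4), AffineIndependent ℝ A ∧
      ∃ C : Pt (n+4), IsCircumcenter A C ∧ C ∉ convexHull ℝ (Set.range A) ∧
        EqualCevians A C := by
  classical
  refine ⟨Constr.vtx n, Constr.vtx_indep n, Constr.Cc n,
    ⟨Constr.rr n, fun i => Constr.dist_Cc_vtx n i⟩, Constr.Cc_notin n, ?_⟩
  set b := mkBasis (Constr.vtx n) (Constr.vtx_indep n) with hb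
  refine ⟨Constr.rr n / (((n:ℝ)+4)/((n:ℝ)+1)), fun j => ?_⟩
  have habs : |1 - b.coord j (Constr.Cc n)| = ((n:ℝ)+4)/((n:ℝ)+1) := by
    rw [hb, Constr.coord_eq]
    unfold Constr.cw
    have hn1 : ((n:ℝ)+1) ≠ 0 := by positivity
    by_cases h : j.val ≤ 1
    · rw [if_pos h]
      have he : 1 - (2*(n:ℝ)+5)/((n:ℝ)+1) = -(((n:ℝ)+4)/((n:ℝ)+1)) := by
        field_simp
        ring
      rw [he, abs_neg, abs_of_pos (by positivity)]
    · rw [if_neg h]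
      have he : 1 - (-3/((n:ℝ)+1)) = ((n:ℝ)+4)/((n:ℝ)+1) := by
        field_simp
        ring
      rw [he, abs_of_pos (by positivity)]
  have hc1 : b.coord j (Constr.Cc n) ≠ 1 := by
    intro hc
    rw [hc] at habs
    simp at habs
    have : (0:ℝ) < ((n:ℝ)+4)/((n:ℝ)+1) := by positivity
    linarith [habs]
  obtain ⟨Q, hfoot, hdist⟩ := cevian_exists b (Constr.Cc n) j hc1
  refine ⟨Q, hfoot, ?_⟩
  have hsame : dist (Constr.vtx n j) Q = dist (b j) Q := rfl
  rw [hsame, hdist, habs]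
  have hdd : dist (b j) (Constr.Cc n) = Constr.rr n := by
    rw [dist_comm]
    exact Constr.dist_Cc_vtx n j
  rw [hdd]


/-- (helper-based proof) -/
theorem statement19 (d : ℕ) (hd : 2 ≤ d) :
    (∃ A : Fin (d+1) → Pt d, AffineIndependent ℝ A ∧
      ∃ C : Pt d, IsCircumcenter A C ∧ C ∉ convexHull ℝ (Set.range A) ∧
        EqualCevians A C) ↔ 4 ≤ d := by
  constructor
  · rintro ⟨A, hA, C, ⟨r, hr⟩, hout, hcev⟩
    by_contra h4
    exact no_small d hd (by omega) A hA C r hr hout hcev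
  · intro h4
    obtain ⟨n, rfl⟩ : ∃ n, d = n + 4 := ⟨d - 4, by omega⟩
    exact exists_big n
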